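/- Let M ≥ 1 and let θ : {0,…,M} × {0,…,M} → ℝ be a phase configuration on the (M+1) × (M+1) square grid such that for every pair of nearest-neighbor sites the difference of phases is not congruent to π modulo 2π. Then the sum of the lattice curls over all M² unit cells equals the sum of ⟦θ(q) − θ(p)⟧ over the 4M consecutive directed edges (p, q) of the boundary cycle of the grid traversed counterclockwise. (The total vortex charge inside a free-boundary grid equals 2π times the winding number of the phases around the boundary.) -/
import Mathlib

open Real Finset

/-- `wrap x` is the unique number in the interval `(-π, π]` congruent to `x` modulo `2π`. -/
noncomputable def wrap (x : ℝ) : ℝ := toIocMod Real.two_pi_pos (-Real.pi) x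

/-- `x` is not congruent to `π` modulo `2π`. -/
def NotPiMod (x : ℝ) : Prop := ∀ k : ℤ, x ≠ Real.pi + 2 * Real.pi * k

/-- The lattice curl of the unit cell with lower-left corner `(i, j)`, whose corners in
counterclockwise cyclic order are `(i,j), (i+1,j), (i+1,j+1), (i,j+1)`. -/
noncomputable def cellCurl (θ : ℕ → ℕ → ℝ) (i j : ℕ) : ℝ :=
  wrap (θ (i + 1) j - θ i j) + wrap (θ (i + 1) (j + 1) - θ (i + 1) j) +
    wrap (θ i (j + 1) - θ (i + 1) (j + 1)) + wrap (θ i j - θ i (j + 1))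

lemma wrap_neg {x : ℝ} (h : NotPiMod x) : wrap (-x) = -wrap x := by
  have hmem : wrap x ∈ Set.Ioc (-Real.pi) (-Real.pi + 2 * Real.pi) :=
    toIocMod_mem_Ioc Real.two_pi_pos (-Real.pi) x
  have hx : wrap x + toIocDiv Real.two_pi_pos (-Real.pi) x • (2 * Real.pi) = x :=
    toIocMod_add_toIocDiv_zsmul _ _ _
  have hne : wrap x ≠ Real.pi := by
    intro he
    have hz : toIocDiv Real.two_pi_pos (-Real.pi) x • (2 * Real.pi) =
        2 * Real.pi * (toIocDiv Real.two_pi_pos (-Real.pi) x : ℝ) := by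
      rw [zsmul_eq_mul]; ring
    exact h (toIocDiv Real.two_pi_pos (-Real.pi) x) (by linarith)
  have hlt : wrap x < Real.pi := lt_of_le_of_ne (by linarith [hmem.2]) hne
  have hgt : -Real.pi < wrap x := hmem.1
  rw [wrap, toIocMod_eq_iff]
  refine ⟨⟨by linarith, by linarith⟩, -toIocDiv Real.two_pi_pos (-Real.pi) x, ?_⟩
  rw [neg_zsmul]
  linarith [hx]

/-- On the `(M+1) × (M+1)` free-boundary grid with sites `{0,…,M} × {0,…,M}` (`M ≥ 1`),
if no nearest-neighbor phase difference is congruent to `π` mod `2π`, then the sum of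
the lattice curls over all `M²` unit cells equals the sum of `⟦θ(q) − θ(p)⟧` over the
`4M` consecutive directed edges `(p, q)` of the boundary cycle traversed
counterclockwise (bottom, then right, then top, then left). -/
theorem sum_cellCurl_eq_boundary_winding (M : ℕ) (hM : 1 ≤ M) (θ : ℕ → ℕ → ℝ)
    (hE : ∀ i j : ℕ, i < M → j ≤ M → NotPiMod (θ (i + 1) j - θ i j))
    (hN : ∀ i j : ℕ, i ≤ M → j < M → NotPiMod (θ i (j + 1) - θ i j)) :
    ∑ i ∈ Finset.range M, ∑ j ∈ Finset.range M, cellCurl θ i j =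
      (∑ i ∈ Finset.range M, wrap (θ (i + 1) 0 - θ i 0)) +
        (∑ j ∈ Finset.range M, wrap (θ M (j + 1) - θ M j)) +
        (∑ i ∈ Finset.range M, wrap (θ i M - θ (i + 1) M)) +
        (∑ j ∈ Finset.range M, wrap (θ 0 j - θ 0 (j + 1))) := by
  set H : ℕ → ℕ → ℝ := fun i j => wrap (θ (i + 1) j - θ i j) with hH
  set V : ℕ → ℕ → ℝ := fun i j => wrap (θ i (j + 1) - θ i j) with hV
  have hcell : ∀ i ∈ Finset.range M, ∀ j ∈ Finset.range M,
      cellCurl θ i j = (H i j - H i (j + 1)) + (V (i + 1) j - V i j) := by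
    intro i hi j hj
    rw [Finset.mem_range] at hi hj
    have h1 : wrap (θ i (j + 1) - θ (i + 1) (j + 1)) = -H i (j + 1) := by
      rw [hH]
      have := wrap_neg (hE i (j + 1) hi (by omega))
      rw [neg_sub] at this
      exact this
    have h2 : wrap (θ i j - θ i (j + 1)) = -V i j := by
      rw [hV]
      have := wrap_neg (hN i j (by omega) hj)
      rw [neg_sub] at this
      exact this
    rw [cellCurl, h1, h2]
    ring
  rw [Finset.sum_congr rfl (fun i hi => Finset.sum_congr rfl (hcell i hi))]
  have tele1 : ∀ i ∈ Finset.range M,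
      ∑ j ∈ Finset.range M, ((H i j - H i (j + 1)) + (V (i + 1) j - V i j)) =
        (H i 0 - H i M) + ∑ j ∈ Finset.range M, (V (i + 1) j - V i j) := by
    intro i _
    rw [Finset.sum_add_distrib]
    congr 1
    have := Finset.sum_range_sub (fun j => H i j) M
    have h' : ∑ j ∈ Finset.range M, (H i j - H i (j + 1)) =
        -∑ j ∈ Finset.range M, (H i (j + 1) - H i j) := by
      rw [← Finset.sum_neg_distrib]
      exact Finset.sum_congr rfl (fun j _ => by ring)
    rw [h', this]; ring
  rw [Finset.sum_congr rfl tele1, Finset.sum_add_distrib, Finset.sum_sub_distrib,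
    ← Finset.sum_comm]
  have tele2 : ∀ j ∈ Finset.range M,
      ∑ i ∈ Finset.range M, (V (i + 1) j - V i j) = V M j - V 0 j := by
    intro j _
    exact Finset.sum_range_sub (fun i => V i j) M
  rw [Finset.sum_congr rfl tele2, Finset.sum_sub_distrib]
  have hb3 : ∑ i ∈ Finset.range M, wrap (θ i M - θ (i + 1) M) =
      -∑ i ∈ Finset.range M, H i M := by
    rw [← Finset.sum_neg_distrib]
    refine Finset.sum_congr rfl (fun i hi => ?_)
    rw [Finset.mem_range] at hi
    have := wrap_neg (hE i M hi le_rfl)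
    rw [neg_sub] at this
    exact this
  have hb4 : ∑ j ∈ Finset.range M, wrap (θ 0 j - θ 0 (j + 1)) =
      -∑ j ∈ Finset.range M, V 0 j := by
    rw [← Finset.sum_neg_distrib]
    refine Finset.sum_congr rfl (fun j hj => ?_)
    rw [Finset.mem_range] at hj
    have := wrap_neg (hN 0 j (by omega) hj)
    rw [neg_sub] at this
    exact this
  rw [hb3, hb4]
  ring
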